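/- Let m be an arbitrary positive integer. Then Σ_{k=0}^{m} (2k−m)² · C(m,k)² = 2m · C(2m−2, m−1). -/
import Mathlib


open Finset

lemma vander1 (n : ℕ) :
    ∑ k ∈ Finset.range (n + 1), n.choose k * n.choose k = (2 * n).choose n := by
  rw [two_mul, Nat.add_choose_eq, Finset.Nat.sum_antidiagonal_eq_sum_range_succ_mk]
  refine Finset.sum_congr rfl fun k hk => ?_
  have hkn : k ≤ n := Nat.lt_succ_iff.mp (Finset.mem_range.mp hk)
  rw [Nat.choose_symm hkn]

lemma vander2 (n : ℕ) :
    ∑ k ∈ Finset.range (n + 1), n.choose k * (n + 1).choose (k + 1)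
      = (2 * n + 1).choose n := by
  have h : 2 * n + 1 = n + (n + 1) := by ring
  rw [h, Nat.add_choose_eq, Finset.Nat.sum_antidiagonal_eq_sum_range_succ_mk]
  refine Finset.sum_congr rfl fun k hk => ?_
  have hkn : k ≤ n := Nat.lt_succ_iff.mp (Finset.mem_range.mp hk)
  have h2 : n - k = (n + 1) - (k + 1) := by omega
  rw [h2, Nat.choose_symm (by omega : k + 1 ≤ n + 1)]

/-- For every positive integer `m`:
`∑_{k=0}^{m} (2k-m)² · C(m,k)² = 2m · C(2m-2, m-1)`. -/
theorem stmt_13 (m : ℕ) (hm : 1 ≤ m) :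
    ∑ k ∈ Finset.range (m + 1),
        (2 * (k : ℤ) - (m : ℤ)) ^ 2 * (m.choose k : ℤ) ^ 2
      = 2 * (m : ℤ) * ((2 * m - 2).choose (m - 1) : ℤ) := by
  obtain ⟨n, rfl⟩ : ∃ n, m = n + 1 := ⟨m - 1, by omega⟩
  have e1 : 2 * (n + 1) - 2 = 2 * n := by omega
  have e2 : n + 1 - 1 = n := by omega
  rw [e1, e2]
  set A : ℤ := ((2 * n).choose n : ℤ) with hA
  set B : ℤ := ((2 * n + 1).choose n : ℤ) with hB
  set D : ℤ := ((2 * n + 2).choose (n + 1) : ℤ) with hD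
  -- the three moment sums
  have S0 : ∑ k ∈ Finset.range (n + 2), ((n + 1).choose k : ℤ) ^ 2 = D := by
    have := vander1 (n + 1)
    have h2 : 2 * (n + 1) = 2 * n + 2 := by ring
    rw [h2] at this
    rw [hD, ← this]
    push_cast
    exact Finset.sum_congr rfl fun k _ => by ring
  have key : ∀ i : ℕ, ((i : ℤ) + 1) * ((n + 1).choose (i + 1) : ℤ)
      = ((n : ℤ) + 1) * (n.choose i : ℤ) := by
    intro i
    have := Nat.add_one_mul_choose_eq n i
    push_cast [Nat.succ_eq_add_one] at this
    linarith [this]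
  have S1 : ∑ k ∈ Finset.range (n + 2), (k : ℤ) * ((n + 1).choose k : ℤ) ^ 2
      = ((n : ℤ) + 1) * B := by
    rw [Finset.sum_range_succ']
    simp only [Nat.cast_zero, zero_mul, add_zero]
    have : ∀ i ∈ Finset.range (n + 1),
        ((i + 1 : ℕ) : ℤ) * ((n + 1).choose (i + 1) : ℤ) ^ 2
          = ((n : ℤ) + 1) * ((n.choose i : ℤ) * ((n + 1).choose (i + 1) : ℤ)) := by
      intro i _
      have hk := key i
      push_cast
      nlinarith [hk]
    rw [Finset.sum_congr rfl this, ← Finset.mul_sum]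
    congr 1
    rw [hB, ← vander2 n]
    push_cast
    rfl
  have S2 : ∑ k ∈ Finset.range (n + 2), (k : ℤ) ^ 2 * ((n + 1).choose k : ℤ) ^ 2
      = ((n : ℤ) + 1) ^ 2 * A := by
    rw [Finset.sum_range_succ']
    simp only [Nat.cast_zero, zero_pow, ne_eq, OfNat.ofNat_ne_zero, not_false_eq_true,
      zero_mul, add_zero]
    have : ∀ i ∈ Finset.range (n + 1),
        ((i + 1 : ℕ) : ℤ) ^ 2 * ((n + 1).choose (i + 1) : ℤ) ^ 2
          = ((n : ℤ) + 1) ^ 2 * ((n.choose i : ℤ) * (n.choose i : ℤ)) := by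
      intro i _
      have hk := key i
      push_cast
      linear_combination (((i : ℤ) + 1) * ((n + 1).choose (i + 1) : ℤ)
        + ((n : ℤ) + 1) * (n.choose i : ℤ)) * hk
    rw [Finset.sum_congr rfl this, ← Finset.mul_sum]
    congr 1
    rw [hA, ← vander1 n]
    push_cast
    rfl
  -- relations between A, B, D
  have R1 : (2 * (n : ℤ) + 1) * A = ((n : ℤ) + 1) * B := by
    have h1 := Nat.add_one_mul_choose_eq (2 * n) n
    have h2 := Nat.choose_symm (show n + 1 ≤ 2 * n + 1 by omega)
    rw [show 2 * n + 1 - (n + 1) = n from by omega] at h2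
    rw [← h2] at h1
    push_cast [Nat.succ_eq_add_one] at h1
    rw [hA, hB]
    linarith [h1]
  have R2 : (2 * (n : ℤ) + 2) * B = ((n : ℤ) + 1) * D := by
    have h1 := Nat.add_one_mul_choose_eq (2 * n + 1) n
    push_cast [Nat.succ_eq_add_one] at h1
    rw [hB, hD]
    linarith [h1]
  calc ∑ k ∈ Finset.range (n + 1 + 1),
        (2 * (k : ℤ) - ((n + 1 : ℕ) : ℤ)) ^ 2 * (((n + 1 : ℕ)).choose k : ℤ) ^ 2
      = 4 * (∑ k ∈ Finset.range (n + 2), (k : ℤ) ^ 2 * ((n + 1).choose k : ℤ) ^ 2)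
        - 4 * ((n : ℤ) + 1) * (∑ k ∈ Finset.range (n + 2), (k : ℤ) * ((n + 1).choose k : ℤ) ^ 2)
        + ((n : ℤ) + 1) ^ 2 * (∑ k ∈ Finset.range (n + 2), ((n + 1).choose k : ℤ) ^ 2) := by
        rw [Finset.mul_sum, Finset.mul_sum, Finset.mul_sum, ← Finset.sum_sub_distrib,
          ← Finset.sum_add_distrib]
        refine Finset.sum_congr rfl fun k _ => ?_
        push_cast
        ring
    _ = 4 * (((n : ℤ) + 1) ^ 2 * A) - 4 * ((n : ℤ) + 1) * (((n : ℤ) + 1) * B)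
        + ((n : ℤ) + 1) ^ 2 * D := by rw [S0, S1, S2]
    _ = 2 * ((n + 1 : ℕ) : ℤ) * A := by
        push_cast
        linear_combination (2 * ((n : ℤ) + 1)) * R1 - ((n : ℤ) + 1) * R2
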